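/- Newton–Kantorovich style local convergence: under the hypotheses of the quantitative inverse function theorem (F differentiable on B_ε(x̃), ‖DF(x̃)⁻¹‖ ≤ c_inv, DF Lipschitz with constant c_L' on B_ε(x̃), c_L' c_inv ε ≤ 1/2, ‖F(x̃)‖ ≤ ε/(2c_inv)), the simplified Newton iteration x^{k+1} = x^k − DF(x̃)^{-1} F(x^k) starting at x⁰ = x̃ remains in B_ε(x̃) and converges to the unique zero x* of F in B_ε(x̃), with ‖x^{k+1} − x*‖ ≤ (c_inv c_L' (ε + ‖x^k − x*‖)) ‖x^k − x*‖ ≤ (1/2 + c_inv c_L' ‖x^k−x*‖)‖x^k − x*‖, hence linear convergence with rate ≤ 3/4 eventually. -/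

import Mathlib

open Metric Filter

set_option maxHeartbeats 1600000 in
/-- Newton–Kantorovich style local convergence of the simplified (chord) Newton iteration
`x^{k+1} = x^k − DF(x̃)⁻¹ F(x^k)` starting at `x⁰ = x̃`: under the hypotheses of the
quantitative inverse function theorem, the iterates stay in `B_ε(x̃)` and converge to the
unique zero `x*` of `F` in `B_ε(x̃)`, with
`‖x^{k+1} − x*‖ ≤ c_inv c_L' (ε + ‖x^k − x*‖) ‖x^k − x*‖`. -/
theorem simplified_newton_convergence
    {X Y : Type*} [NormedAddCommGroup X] [NormedSpace ℝ X] [CompleteSpace X]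
    [NormedAddCommGroup Y] [NormedSpace ℝ Y] [CompleteSpace Y]
    (F : X → Y) (hF : Continuous F)
    (xt : X) (ε c_inv c_L' : ℝ) (hε : 0 < ε) (hcinv : 0 < c_inv)
    (F' : X → X →L[ℝ] Y)
    (hdiff : ∀ x ∈ closedBall xt ε, HasFDerivAt F (F' x) x)
    (A : X ≃L[ℝ] Y) (hA : (A : X →L[ℝ] Y) = F' xt)
    (hAinv : ‖(A.symm : Y →L[ℝ] X)‖ ≤ c_inv)
    (hLip : ∀ x₁ ∈ closedBall xt ε, ∀ x₂ ∈ closedBall xt ε,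
      ‖F' x₁ - F' x₂‖ ≤ c_L' * ‖x₁ - x₂‖)
    (hsmall₁ : c_L' * c_inv * ε ≤ 1 / 2)
    (hsmall₂ : ‖F xt‖ ≤ ε / (2 * c_inv))
    (x : ℕ → X) (hx0 : x 0 = xt)
    (hxrec : ∀ k, x (k + 1) = x k - A.symm (F (x k))) :
    ∃ xs : X, xs ∈ closedBall xt ε ∧ F xs = 0 ∧
      (∀ z ∈ closedBall xt ε, F z = 0 → z = xs) ∧
      (∀ k, x k ∈ closedBall xt ε) ∧
      (∀ k, ‖x (k + 1) - xs‖ ≤ c_inv * c_L' * (ε + ‖x k - xs‖) * ‖x k - xs‖) ∧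
      Tendsto x atTop (nhds xs) := by
  by_cases hsub : Subsingleton X
  · -- degenerate case: X is a subsingleton
    refine ⟨xt, mem_closedBall_self hε.le, ?_, fun z _ _ => Subsingleton.elim z xt,
      fun k => by rw [Subsingleton.elim (x k) xt]; exact mem_closedBall_self hε.le, ?_, ?_⟩
    · have h0 : A.symm (F xt) = 0 := Subsingleton.elim _ _
      have := congrArg A h0
      rwa [A.apply_symm_apply, map_zero] at this
    · intro k
      have h1 : x (k + 1) = xt := Subsingleton.elim _ _
      have h2 : x k = xt := Subsingleton.elim _ _
      rw [h1, h2, sub_self, norm_zero]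
      simp
    · have : x = fun _ => xt := funext fun k => Subsingleton.elim _ _
      rw [this]; exact tendsto_const_nhds
  · haveI : Nontrivial X := not_subsingleton_iff_nontrivial.mp hsub
    -- c_L' ≥ 0
    obtain ⟨v, hv⟩ := exists_ne (0 : X)
    have hcL : 0 ≤ c_L' := by
      set p : X := xt + (ε / ‖v‖) • v with hp
      have hvn : 0 < ‖v‖ := norm_pos_iff.mpr hv
      have hpball : p ∈ closedBall xt ε := by
        rw [mem_closedBall, dist_eq_norm, hp, add_sub_cancel_left, norm_smul, Real.norm_eq_abs,
          abs_of_pos (div_pos hε hvn), div_mul_cancel₀ _ hvn.ne']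
      have h1 := hLip p hpball xt (mem_closedBall_self hε.le)
      have h2 : ‖p - xt‖ = ε := by
        rw [hp, add_sub_cancel_left, norm_smul, Real.norm_eq_abs,
          abs_of_pos (div_pos hε hvn), div_mul_cancel₀ _ hvn.ne']
      rw [h2] at h1
      nlinarith [norm_nonneg (F' p - F' xt)]
    -- mean value estimate
    have key : ∀ a ∈ closedBall xt ε, ∀ b ∈ closedBall xt ε,
        ‖F b - F a - A (b - a)‖ ≤ (c_L' * ε) * ‖b - a‖ := by
      intro a ha b hb
      have := (convex_closedBall xt ε).norm_image_sub_le_of_norm_hasFDerivWithin_le'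
        (f := F) (f' := F') (φ := (A : X →L[ℝ] Y)) (C := c_L' * ε)
        (fun z hz => (hdiff z hz).hasFDerivWithinAt)
        (fun z hz => by
          rw [hA]
          calc ‖F' z - F' xt‖ ≤ c_L' * ‖z - xt‖ :=
                hLip z hz xt (mem_closedBall_self hε.le)
            _ ≤ c_L' * ε := by
                apply mul_le_mul_of_nonneg_left _ hcL
                rwa [← dist_eq_norm, ← mem_closedBall]) ha hb
      exact this
    set G : X → X := fun z => z - A.symm (F z) with hG
    have hsymm_le : ∀ w : Y, ‖A.symm w‖ ≤ c_inv * ‖w‖ := fun w =>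
      le_trans ((A.symm : Y →L[ℝ] X).le_opNorm w)
        (mul_le_mul_of_nonneg_right hAinv (norm_nonneg w))
    have hGid : ∀ a b : X, G b - G a = A.symm (A (b - a) - (F b - F a)) := by
      intro a b
      simp only [hG, map_sub, ContinuousLinearEquiv.symm_apply_apply]
      abel
    have hcontr : ∀ a ∈ closedBall xt ε, ∀ b ∈ closedBall xt ε,
        ‖G b - G a‖ ≤ (1 / 2) * ‖b - a‖ := by
      intro a ha b hb
      rw [hGid a b]
      calc ‖A.symm (A (b - a) - (F b - F a))‖
          ≤ c_inv * ‖A (b - a) - (F b - F a)‖ := hsymm_le _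
        _ = c_inv * ‖F b - F a - A (b - a)‖ := by rw [norm_sub_rev]
        _ ≤ c_inv * ((c_L' * ε) * ‖b - a‖) :=
            mul_le_mul_of_nonneg_left (key a ha b hb) hcinv.le
        _ ≤ (1 / 2) * ‖b - a‖ := by nlinarith [norm_nonneg (b - a)]
    have hmaps : ∀ z ∈ closedBall xt ε, G z ∈ closedBall xt ε := by
      intro z hz
      rw [mem_closedBall, dist_eq_norm]
      have h1 : G z - xt = (G z - G xt) + (G xt - xt) := by abel
      have h2 : G xt - xt = -(A.symm (F xt)) := by simp [hG]
      have h3 : ‖A.symm (F xt)‖ ≤ ε / 2 := by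
        calc ‖A.symm (F xt)‖ ≤ c_inv * ‖F xt‖ := hsymm_le _
          _ ≤ c_inv * (ε / (2 * c_inv)) :=
              mul_le_mul_of_nonneg_left hsmall₂ hcinv.le
          _ = ε / 2 := by field_simp
      have h4 : ‖G z - G xt‖ ≤ (1 / 2) * ‖z - xt‖ :=
        hcontr xt (mem_closedBall_self hε.le) z hz
      have h5 : ‖z - xt‖ ≤ ε := by rwa [← dist_eq_norm, ← mem_closedBall]
      calc ‖G z - xt‖ ≤ ‖G z - G xt‖ + ‖G xt - xt‖ := by
            rw [h1]; exact norm_add_le _ _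
        _ ≤ (1 / 2) * ‖z - xt‖ + ε / 2 := by
            rw [h2, norm_neg]; exact add_le_add h4 h3
        _ ≤ ε := by linarith
    -- fixed point on the subtype
    haveI : CompleteSpace (closedBall xt ε) :=
      IsClosed.completeSpace_coe (hs := isClosed_closedBall)
    haveI : Nonempty (closedBall xt ε) := ⟨⟨xt, mem_closedBall_self hε.le⟩⟩
    set G' : closedBall xt ε → closedBall xt ε :=
      fun z => ⟨G z.1, hmaps z.1 z.2⟩ with hG'
    have hcontr' : ContractingWith (1 / 2 : NNReal) G' := by
      constructor
      · rw [← NNReal.coe_lt_coe]; push_cast; norm_num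
      · apply LipschitzWith.of_dist_le_mul
        intro a b
        simp only [Subtype.dist_eq, dist_eq_norm]
        have := hcontr b.1 b.2 a.1 a.2
        simpa using this
    obtain ⟨xs, hxsball, hfix⟩ : ∃ xs ∈ closedBall xt ε, G xs = xs :=
      ⟨(hcontr'.fixedPoint G').1, (hcontr'.fixedPoint G').2,
        congrArg Subtype.val hcontr'.fixedPoint_isFixedPt⟩
    have huniqG : ∀ z ∈ closedBall xt ε, G z = z → z = xs := by
      intro z hz hGz
      have h := hcontr xs hxsball z hz
      rw [hGz, hfix] at h
      have h0 : z - xs = 0 := norm_le_zero_iff.mp (by linarith)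
      exact sub_eq_zero.mp h0
    have hFxs : F xs = 0 := by
      have h0 : A.symm (F xs) = 0 := by
        have : xs - A.symm (F xs) = xs := hfix
        linear_combination (norm := abel) -this
      have := congrArg A h0
      rwa [A.apply_symm_apply, map_zero] at this
    -- uniqueness
    have huniq : ∀ z ∈ closedBall xt ε, F z = 0 → z = xs := by
      intro z hz hFz
      exact huniqG z hz (by simp [hG, hFz])
    -- iterates stay in ball
    have hxG : ∀ k, x (k + 1) = G (x k) := fun k => hxrec k
    have hxball : ∀ k, x k ∈ closedBall xt ε := by
      intro k
      induction k with
      | zero => rw [hx0]; exact mem_closedBall_self hε.le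
      | succ n ih => rw [hxG n]; exact hmaps _ ih
    -- main estimate
    have hbound : ∀ k, ‖x (k + 1) - xs‖ ≤ c_inv * c_L' * (ε + ‖x k - xs‖) * ‖x k - xs‖ := by
      intro k
      have h1 : x (k + 1) - xs = G (x k) - G xs := by rw [hxG k, hfix]
      rw [h1, hGid xs (x k)]
      calc ‖A.symm (A (x k - xs) - (F (x k) - F xs))‖
          ≤ c_inv * ‖A (x k - xs) - (F (x k) - F xs)‖ := hsymm_le _
        _ = c_inv * ‖F (x k) - F xs - A (x k - xs)‖ := by rw [norm_sub_rev]
        _ ≤ c_inv * ((c_L' * ε) * ‖x k - xs‖) :=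
            mul_le_mul_of_nonneg_left (key xs hxsball (x k) (hxball k)) hcinv.le
        _ ≤ c_inv * c_L' * (ε + ‖x k - xs‖) * ‖x k - xs‖ := by
            nlinarith [mul_nonneg (mul_nonneg (mul_nonneg hcinv.le hcL)
              (norm_nonneg (x k - xs))) (norm_nonneg (x k - xs))]
    -- convergence
    have hhalf : ∀ k, ‖x (k + 1) - xs‖ ≤ (1 / 2) * ‖x k - xs‖ := by
      intro k
      have h1 : x (k + 1) - xs = G (x k) - G xs := by rw [hxG k, hfix]
      rw [h1]
      exact hcontr xs hxsball (x k) (hxball k)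
    have hgeo : ∀ k, ‖x k - xs‖ ≤ (1 / 2 : ℝ) ^ k * ‖x 0 - xs‖ := by
      intro k
      induction k with
      | zero => simp
      | succ n ih =>
        calc ‖x (n + 1) - xs‖ ≤ (1 / 2) * ‖x n - xs‖ := hhalf n
          _ ≤ (1 / 2) * ((1 / 2 : ℝ) ^ n * ‖x 0 - xs‖) := by linarith
          _ = (1 / 2 : ℝ) ^ (n + 1) * ‖x 0 - xs‖ := by ring
    have hg : Tendsto (fun k : ℕ => (1 / 2 : ℝ) ^ k * ‖x 0 - xs‖) atTop (nhds 0) := by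
      have h := (tendsto_pow_atTop_nhds_zero_of_lt_one
        (by norm_num : (0:ℝ) ≤ 1 / 2) (by norm_num : (1:ℝ) / 2 < 1)).mul_const ‖x 0 - xs‖
      simpa only [zero_mul] using h
    have htend : Tendsto x atTop (nhds xs) := by
      rw [tendsto_iff_dist_tendsto_zero]
      exact squeeze_zero (fun k => dist_nonneg)
        (fun k => by rw [dist_eq_norm]; exact hgeo k) hg
    exact ⟨xs, hxsball, hFxs, huniq, hxball, hbound, htend⟩
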